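/- Let (T*, I*, V*) be an equilibrium of the HCV system with T* > 0 and I* > 0. Then V* = (1-ε)·p·I*/c, I* = ((1-θ)·β·p·T_max/(c·r_I) - 1)·T* + (T_max/r_I)·(r_I - δ), and T* is a root of the quadratic h₂, i.e. h₂(T*) = 0. -/

import Mathlib

open Set

/-- `(T, I, V)` is an equilibrium point of the HCV system. -/
def hcvEquil (s rT rI dT dI Tmax β p q c η ε : ℝ) (T I V : ℝ) : Prop :=
  s + rT * T * (1 - (T + I) / Tmax) - dT * T - (1 - η) * β * V * T + q * I = 0 ∧
  rI * I * (1 - (T + I) / Tmax) + (1 - η) * β * V * T - dI * I - q * I = 0 ∧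
  (1 - ε) * p * I - c * V = 0

/-- The quadratic polynomial `h₂` (with `δ = d_I + q`, `A = (1-θ)βpT_max/c`). -/
noncomputable def hcvH2 (s rT rI dT dI Tmax β p q c η ε : ℝ) (T : ℝ) : ℝ :=
  s + q * (Tmax / rI) * (rI - (dI + q))
    + (rT - (dT + q) - (rT / rI) * (rI - (dI + q))
        - ((1 - ε) * (1 - η) * β * p * Tmax / c / rI) * (rI - (dI + q))
        + ((1 - ε) * (1 - η) * β * p * Tmax / c) * q / rI) * T
    - (rT / Tmax) * (((1 - ε) * (1 - η) * β * p * Tmax / c) ^ 2 / (rI * rT)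
        + ((1 - ε) * (1 - η) * β * p * Tmax / c) / rI
        - ((1 - ε) * (1 - η) * β * p * Tmax / c) / rT) * T ^ 2

/-- At any infected equilibrium, `V* = (1-ε)pI*/c`,
`I* = ((1-θ)βpT_max/(c r_I) - 1)T* + (T_max/r_I)(r_I - δ)` and `h₂(T*) = 0`. -/
theorem hcv_infected_equilibrium_relations
    (s rT rI dT dI Tmax β p q c η ε : ℝ)
    (hs : 0 < s) (hrT : 0 < rT) (hrI : 0 < rI) (hdT : 0 < dT) (hdI : 0 < dI)
    (hTmax : 0 < Tmax) (hβ : 0 < β) (hp : 0 < p) (hq : 0 < q) (hc : 0 < c)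
    (hη : η ∈ Set.Ico (0 : ℝ) 1) (hε : ε ∈ Set.Ico (0 : ℝ) 1)
    (hrIT : rI ≤ rT) (hsT : s ≤ dT * Tmax) (hdTI : dT ≤ dI)
    (Ts Is Vs : ℝ) (hTs : 0 < Ts) (hIs : 0 < Is)
    (heq : hcvEquil s rT rI dT dI Tmax β p q c η ε Ts Is Vs) :
    Vs = (1 - ε) * p * Is / c ∧
    Is = ((1 - ε) * (1 - η) * β * p * Tmax / (c * rI) - 1) * Ts
          + (Tmax / rI) * (rI - (dI + q)) ∧
    hcvH2 s rT rI dT dI Tmax β p q c η ε Ts = 0 := by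
  obtain ⟨e1, e2, e3⟩ := heq
  have hc0 := hc.ne'
  have hT0 := hTmax.ne'
  have hrI0 := hrI.ne'
  have hrT0 := hrT.ne'
  have hIs0 := hIs.ne'
  have hV : Vs = (1 - ε) * p * Is / c := by
    field_simp
    linarith
  subst hV
  have key : Is * (rI * (Tmax - (Ts + Is)) * c + (1 - ε) * (1 - η) * β * p * Ts * Tmax
      - (dI + q) * Tmax * c) = 0 := by
    field_simp at e2
    linear_combination e2
  have key2 : rI * (Tmax - (Ts + Is)) * c + (1 - ε) * (1 - η) * β * p * Ts * Tmax
      - (dI + q) * Tmax * c = 0 := by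
    rcases mul_eq_zero.mp key with h | h
    · exact absurd h hIs0
    · exact h
  have hI : Is = ((1 - ε) * (1 - η) * β * p * Tmax / (c * rI) - 1) * Ts
      + (Tmax / rI) * (rI - (dI + q)) := by
    field_simp
    linear_combination (-1) * key2
  have e1' : s * Tmax * c + rT * Ts * (Tmax - (Ts + Is)) * c - dT * Ts * Tmax * c
      - (1 - ε) * (1 - η) * β * p * Is * Ts * Tmax + q * Is * Tmax * c = 0 := by
    field_simp at e1
    linear_combination e1
  refine ⟨rfl, hI, ?_⟩
  unfold hcvH2
  field_simp
  apply mul_left_cancel₀ hT0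
  linear_combination 1 * ((c*rI) * e1'
    - (c*rT*Ts - Tmax*(q*c - (1-ε)*(1-η)*β*p*Ts)) * key2)
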